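/- Let p > 1 and let s, q, V : ℝ³ → (0,∞) be radially symmetric C² functions. Suppose U(x,t) = ψ(|x|,t) x/|x| is a C² solution of s(x)∂ₜ²U + ∇×∇×U + q(x)U ± V(x)|U|^{p−1}U = 0 on ℝ³ × ℝ, where ψ : [0,∞) × ℝ → ℝ is C². Let a : ℝ³ → ℝ be any radially symmetric C² function. Then U_a(x,t) := U(x, t + a(x)) is also a C² solution of the same equation. -/

import Mathlib

noncomputable section
open Real Filter Topology
open scoped Classical

/-- Three-dimensional Euclidean space. -/
abbrev E3 : Type := EuclideanSpace ℝ (Fin 3)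

/-- A function on `ℝ³` is radially symmetric if it depends only on `|x|`. -/
def IsRadial (f : E3 → ℝ) : Prop := ∀ x y : E3, ‖x‖ = ‖y‖ → f x = f y

/-- Levi-Civita symbol on `Fin 3`. -/
def levi (i j k : Fin 3) : ℝ :=
  if i = j ∨ j = k ∨ i = k then 0 else if j = i + 1 then 1 else -1

/-- Partial derivative `∂ⱼ f` of a scalar function on `ℝ³`. -/
noncomputable def pd (j : Fin 3) (f : E3 → ℝ) (x : E3) : ℝ :=
  fderiv ℝ f x (EuclideanSpace.single j 1)

/-- Curl of a vector field on `ℝ³`: `(∇×F)ᵢ = Σⱼₖ εᵢⱼₖ ∂ⱼFₖ`. -/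
noncomputable def curl (F : E3 → E3) (x : E3) : E3 :=
  (WithLp.equiv 2 (Fin 3 → ℝ)).symm fun i =>
    ∑ j : Fin 3, ∑ k : Fin 3, levi i j k * pd j (fun y => F y k) x

/-- Second time derivative `∂ₜ²U` of a time-dependent vector field. -/
noncomputable def dtt (U : E3 × ℝ → E3) (x : E3) (t : ℝ) : E3 :=
  deriv (deriv (fun σ : ℝ => U (x, σ))) t

lemma pd_eq (F : E3 → E3) (x : E3) (hF : DifferentiableAt ℝ F x) (j k : Fin 3) :
    pd j (fun y => F y k) x = fderiv ℝ F x (EuclideanSpace.single j 1) k := by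
  have h := ((EuclideanSpace.proj (𝕜 := ℝ) k).hasFDerivAt.comp x hF.hasFDerivAt).fderiv
  unfold pd
  rw [show (fun y => F y k) = (⇑(EuclideanSpace.proj (𝕜 := ℝ) k : E3 →L[ℝ] ℝ)) ∘ F from rfl, h]
  rfl

lemma curl_eq_zero_of_symm (F : E3 → E3) (x : E3)
    (h : ∀ j k : Fin 3, pd j (fun y => F y k) x = pd k (fun y => F y j) x) :
    curl F x = 0 := by
  unfold curl
  have hz : (fun i => ∑ j : Fin 3, ∑ k : Fin 3, levi i j k * pd j (fun y => F y k) x)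
      = (fun _ : Fin 3 => (0:ℝ)) := by
    funext i
    fin_cases i <;>
      · simp only [Fin.sum_univ_three]
        simp (config := { decide := true }) only [levi]
        norm_num
        linarith [h 0 1, h 0 2, h 1 2]
  rw [hz]
  rfl

lemma curl_zero_fn (x : E3) : curl (fun _ => (0:E3)) x = 0 := by
  unfold curl
  have : ∀ j k : Fin 3, pd j (fun y : E3 => (0:E3) k) x = 0 := by
    intro j k
    have : (fun y : E3 => (0:E3) k) = fun _ : E3 => (0:ℝ) := rfl
    rw [pd, this, fderiv_fun_const]
    rfl
  simp only [this, mul_zero, Finset.sum_const_zero]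
  rfl

noncomputable def refl3 (m : Fin 3) : E3 →L[ℝ] E3 :=
  ContinuousLinearMap.id ℝ E3
    - (EuclideanSpace.proj (𝕜 := ℝ) m : E3 →L[ℝ] ℝ).smulRight ((2:ℝ) • EuclideanSpace.single m 1)

lemma refl3_apply (m : Fin 3) (y : E3) (i : Fin 3) :
    refl3 m y i = y i - 2 * y m * (if i = m then 1 else 0) := by
  simp [refl3, EuclideanSpace.single_apply, PiLp.sub_apply, PiLp.smul_apply, smul_eq_mul]
  ring

lemma refl3_norm (m : Fin 3) (y : E3) : ‖refl3 m y‖ = ‖y‖ := by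
  rw [EuclideanSpace.norm_eq, EuclideanSpace.norm_eq]
  congr 1
  apply Finset.sum_congr rfl
  intro i _
  rcases eq_or_ne i m with rfl | h
  · rw [refl3_apply]
    have h2 : y i - 2 * y i * (if i = i then (1:ℝ) else 0) = -(y i) := by
      simp only [eq_self_iff_true, if_true]; ring
    rw [h2]
    simp
  · rw [refl3_apply, if_neg h]
    ring_nf

lemma refl3_single (j : Fin 3) :
    refl3 j (EuclideanSpace.single j 1) = -(EuclideanSpace.single j 1) := by
  have : ∀ i, refl3 j (EuclideanSpace.single j (1:ℝ)) i = (-(EuclideanSpace.single j (1:ℝ))) i := by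
    intro i
    rw [refl3_apply]
    simp only [EuclideanSpace.single_apply, PiLp.neg_apply]
    rcases eq_or_ne i j with rfl | h
    · norm_num
    · simp [h]
  exact PiLp.ext this

lemma curl_radial (H : E3 → E3) (c : ℝ → ℝ) (hH : Differentiable ℝ H)
    (hrep : ∀ y, H y = (c ‖y‖) • y) (x : E3) : curl H x = 0 := by
  apply curl_eq_zero_of_symm
  have key : ∀ j k : Fin 3, j ≠ k → fderiv ℝ H x (EuclideanSpace.single j 1) k
      = fderiv ℝ H x (EuclideanSpace.single k 1) j := by
    intro j k hjk
    rcases eq_or_ne x 0 with rfl | hx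
    · -- reflection argument: both sides are zero
      have zero_of_ne : ∀ j k : Fin 3, j ≠ k →
          fderiv ℝ H 0 (EuclideanSpace.single j 1) k = 0 := by
        intro j k hjk
        set L := fderiv ℝ H (0:E3) with hL
        set R := refl3 j with hR
        have hR0 : R (0:E3) = 0 := map_zero R
        have h1 : HasFDerivAt (H ∘ R) (L.comp R) 0 := by
          have := ((hH (R 0)).hasFDerivAt).comp (0:E3) R.hasFDerivAt
          rwa [hR0] at this
        have h2 : HasFDerivAt (⇑R ∘ H) (R.comp L) 0 :=
          R.hasFDerivAt.comp 0 (hH 0).hasFDerivAt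
        have hfun : H ∘ ⇑R = ⇑R ∘ H := by
          funext y
          simp only [Function.comp_apply]
          rw [hrep, hrep y, refl3_norm, map_smul]
        rw [hfun] at h1
        have hcomm : L.comp R = R.comp L := h1.unique h2
        have happ : L (R (EuclideanSpace.single j 1)) k
            = (R (L (EuclideanSpace.single j 1))) k := by
          have := congrArg (fun (T : E3 →L[ℝ] E3) => T (EuclideanSpace.single j 1) k) hcomm
          simpa using this
        rw [refl3_single, map_neg] at happ
        rw [refl3_apply] at happ
        rw [if_neg (Ne.symm hjk)] at happ
        simp only [mul_zero, sub_zero, PiLp.neg_apply] at happ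
        linarith
      rw [zero_of_ne j k hjk, zero_of_ne k j (Ne.symm hjk)]
    · -- direct computation
      have hx0 : (0:ℝ) < ‖x‖ := norm_pos_iff.mpr hx
      set u : E3 := (‖x‖⁻¹ : ℝ) • x with hu
      have hu1 : ‖u‖ = 1 := norm_smul_inv_norm hx
      set g : ℝ → ℝ := fun ρ => (inner ℝ (H (ρ • u)) u : ℝ) / ρ with hg
      have hgc : ∀ ρ : ℝ, 0 < ρ → g ρ = c ρ := by
        intro ρ hρ
        have hn : ‖ρ • u‖ = ρ := by
          rw [norm_smul, hu1, mul_one, Real.norm_eq_abs, abs_of_pos hρ]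
        have : H (ρ • u) = (c ρ) • (ρ • u) := by rw [hrep, hn]
        rw [hg]
        simp only [this, real_inner_smul_left, smul_smul]
        rw [real_inner_self_eq_norm_sq, hu1]
        field_simp
      set w : ℝ → ℝ := fun ρ => g (Real.sqrt ρ) with hw
      have hgd : DifferentiableAt ℝ g ‖x‖ := by
        apply DifferentiableAt.div
        · exact DifferentiableAt.inner ℝ
            ((hH _).comp _ ((by fun_prop : DifferentiableAt ℝ (fun ρ : ℝ => ρ • u) ‖x‖))) (differentiableAt_const u)
        · exact differentiableAt_id
        · exact hx0.ne'
      have hsq : Real.sqrt (‖x‖^2) = ‖x‖ := Real.sqrt_sq (norm_nonneg x)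
      have hwd : DifferentiableAt ℝ w (‖x‖^2) := by
        have h1 : DifferentiableAt ℝ g (Real.sqrt (‖x‖^2)) := by rwa [hsq]
        exact h1.comp _ ((Real.hasDerivAt_sqrt (pow_pos hx0 2).ne').differentiableAt)
      set N : E3 →L[ℝ] ℝ := (fderivInnerCLM ℝ ((x : E3), (x : E3))).comp
            ((ContinuousLinearMap.id ℝ E3).prod (ContinuousLinearMap.id ℝ E3)) with hN
      have hn2 : HasFDerivAt (fun y : E3 => (inner ℝ y y : ℝ)) N x :=
        (hasFDerivAt_id x).inner ℝ (hasFDerivAt_id x)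
      have hnx : (inner ℝ x x : ℝ) = ‖x‖^2 := real_inner_self_eq_norm_sq x
      have hder : HasDerivAt w (deriv w (‖x‖^2)) ((inner ℝ x x : ℝ)) := by
        rw [hnx]; exact hwd.hasDerivAt
      have hscal : HasFDerivAt (fun y : E3 => w (inner ℝ y y : ℝ))
          (deriv w (‖x‖^2) • N) x :=
        HasDerivAt.comp_hasFDerivAt (f := fun y : E3 => (inner ℝ y y : ℝ)) x hder hn2
      have hK : HasFDerivAt (fun y : E3 => w (inner ℝ y y : ℝ) • y)
          (w (inner ℝ x x : ℝ) • ContinuousLinearMap.id ℝ E3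
            + (deriv w (‖x‖^2) • N).smulRight x) x :=
        hscal.smul (hasFDerivAt_id x)
      have hev : (fun y : E3 => w (inner ℝ y y : ℝ) • y) =ᶠ[nhds x] H := by
        have hmem : {y : E3 | y ≠ 0} ∈ nhds x := isOpen_compl_singleton.mem_nhds hx
        filter_upwards [hmem] with y hy
        have hy0 : (0:ℝ) < ‖y‖ := norm_pos_iff.mpr hy
        have : Real.sqrt (inner ℝ y y : ℝ) = ‖y‖ := by
          rw [real_inner_self_eq_norm_sq, Real.sqrt_sq (norm_nonneg y)]
        rw [hw]
        simp only [this]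
        rw [hgc _ hy0, ← hrep]
      have hfd : fderiv ℝ H x = (w (inner ℝ x x : ℝ) • ContinuousLinearMap.id ℝ E3
            + (deriv w (‖x‖^2) • N).smulRight x) := by
        rw [← (hK.congr_of_eventuallyEq hev.symm).fderiv]
      rw [hfd]
      -- now compute components
      have comp_eval : ∀ j k : Fin 3,
          ((w (inner ℝ x x : ℝ) • ContinuousLinearMap.id ℝ E3
            + (deriv w (‖x‖^2) • N).smulRight x)
            (EuclideanSpace.single j 1)) k
          = w (inner ℝ x x : ℝ) * (if k = j then 1 else 0)
            + deriv w (‖x‖^2) * (2 * x j) * x k := by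
        intro j k
        simp only [hN, ContinuousLinearMap.add_apply, ContinuousLinearMap.smul_apply,
          ContinuousLinearMap.coe_id', id_eq, ContinuousLinearMap.smulRight_apply,
          ContinuousLinearMap.coe_comp', Function.comp_apply, ContinuousLinearMap.prod_apply,
          fderivInnerCLM_apply]
        rw [PiLp.add_apply, PiLp.smul_apply, PiLp.smul_apply]
        rw [EuclideanSpace.single_apply]
        have hin : (inner ℝ x (EuclideanSpace.single j (1:ℝ)) : ℝ)
            + (inner ℝ (EuclideanSpace.single j (1:ℝ)) x : ℝ) = 2 * x j := by
          rw [EuclideanSpace.inner_single_right, EuclideanSpace.inner_single_left]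
          simp only [starRingEnd_apply, star_trivial, map_one, one_mul, mul_one]
          try ring
        rw [hin]
        simp only [smul_eq_mul]
        try ring
      rw [comp_eval j k, comp_eval k j]
      simp only [if_neg hjk, if_neg (Ne.symm hjk)]
      ring
  intro j k
  rcases eq_or_ne j k with rfl | hjk
  · rfl
  rw [pd_eq H x (hH x) j k, pd_eq H x (hH x) k j, key j k hjk]

lemma dtt_shift (U : E3 × ℝ → E3) (a : E3 → ℝ) (x : E3) (t : ℝ) :
    dtt (fun z : E3 × ℝ => U (z.1, z.2 + a z.1)) x t = dtt U x (t + a x) := by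
  unfold dtt
  have h1 : (fun σ : ℝ => U ((x, σ).1, (x, σ).2 + a (x, σ).1)) = fun σ => U (x, σ + a x) := rfl
  rw [h1]
  have h2 : deriv (fun σ : ℝ => U (x, σ + a x))
      = fun σ => deriv (fun τ => U (x, τ)) (σ + a x) := by
    funext σ
    exact deriv_comp_add_const (fun τ => U (x, τ)) (a x) σ
  rw [h2]
  exact deriv_comp_add_const (deriv fun τ => U (x, τ)) (a x) t

/-- Phase shift: if `U(x,t) = ψ(|x|,t)x/|x|` is a C² solution of
`s(x)∂ₜ²U + ∇×∇×U + q(x)U ± V(x)|U|^{p-1}U = 0` and `a : ℝ³ → ℝ` is a radially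
symmetric C² function, then `U_a(x,t) = U(x, t + a(x))` is also a C² solution. -/
theorem phase_shifted_breather (p : ℝ) (hp : 1 < p)
    (ε : ℝ) (hε : ε = 1 ∨ ε = -1)  -- the fixed sign ±
    (s q V : E3 → ℝ)
    (hs_pos : ∀ x, 0 < s x) (hq_pos : ∀ x, 0 < q x) (hV_pos : ∀ x, 0 < V x)
    (hs_rad : IsRadial s) (hq_rad : IsRadial q) (hV_rad : IsRadial V)
    (hs_C2 : ContDiff ℝ 2 s) (hq_C2 : ContDiff ℝ 2 q) (hV_C2 : ContDiff ℝ 2 V)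
    (ψ : ℝ × ℝ → ℝ) (hψ : ContDiffOn ℝ 2 ψ (Set.Ici 0 ×ˢ (Set.univ : Set ℝ)))
    (U : E3 × ℝ → E3)
    (hU : ∀ (x : E3) (t : ℝ), U (x, t) =
      if x = 0 then 0 else (ψ (‖x‖, t) / ‖x‖) • x)
    (hUC2 : ContDiff ℝ 2 U)
    (hPDE : ∀ (x : E3) (t : ℝ),
      s x • dtt U x t + curl (curl (fun y => U (y, t))) x + q x • U (x, t)
        + ε • (V x • (‖U (x, t)‖ ^ (p - 1) • U (x, t))) = 0)
    (a : E3 → ℝ) (ha_rad : IsRadial a) (ha_C2 : ContDiff ℝ 2 a) :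
    ContDiff ℝ 2 (fun z : E3 × ℝ => U (z.1, z.2 + a z.1)) ∧
    (∀ (x : E3) (t : ℝ),
      s x • dtt (fun z : E3 × ℝ => U (z.1, z.2 + a z.1)) x t
        + curl (curl (fun y => U (y, t + a y))) x + q x • U (x, t + a x)
        + ε • (V x • (‖U (x, t + a x)‖ ^ (p - 1) • U (x, t + a x))) = 0) := by
  have hΦ : ContDiff ℝ 2 (fun z : E3 × ℝ => ((z.1, z.2 + a z.1) : E3 × ℝ)) :=
    contDiff_fst.prodMk (contDiff_snd.add (ha_C2.comp contDiff_fst))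
  have hUa : ContDiff ℝ 2 (fun z : E3 × ℝ => U (z.1, z.2 + a z.1)) := hUC2.comp hΦ
  refine ⟨hUa, ?_⟩
  intro x t
  have hone : (1 : WithTop ℕ∞) ≤ 2 := by norm_num
  have hcurlF : ∀ τ : ℝ, curl (fun y => U (y, τ)) = fun _ => 0 := by
    intro τ
    funext z
    apply curl_radial _ (fun r => ψ (r, τ) / r)
    · exact (hUC2.differentiable (by norm_num)).comp
        (differentiable_id.prodMk (differentiable_const τ))
    · intro y
      rw [hU]
      by_cases hy : y = 0
      · simp [hy]
      · rw [if_neg hy]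
  have hcurlG : curl (fun y => U (y, t + a y)) = fun _ => 0 := by
    funext z
    apply curl_radial _ (fun r => ψ (r, t + a ((r : ℝ) • EuclideanSpace.single 0 1)) / r)
    · exact (hUa.differentiable (by norm_num)).comp
        (differentiable_id.prodMk (differentiable_const t))
    · intro y
      rw [hU]
      by_cases hy : y = 0
      · simp [hy]
      · rw [if_neg hy]
        have hay : a y = a ((‖y‖ : ℝ) • EuclideanSpace.single 0 1) := by
          apply ha_rad
          rw [norm_smul, EuclideanSpace.norm_single, norm_one, mul_one, Real.norm_eq_abs,
            abs_of_nonneg (norm_nonneg y)]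
        rw [hay]
  have h1 := hPDE x (t + a x)
  rw [hcurlF (t + a x), curl_zero_fn] at h1
  rw [hcurlG, curl_zero_fn, dtt_shift U a x t]
  exact h1
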